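/- Let T be a bounded Hilbert space operator satisfying T*² − 2T*T + T² = 0 (i.e., T is 2-symmetric). Then T is self-adjoint. Consequently, if a commuting d-tuple A = (A_1,...,A_d) of Hilbert space operators satisfies δ²_{A*,A}(I) = 0, then Σ_{i=1}^d A_i is self-adjoint. -/

import Mathlib

open ContinuousLinearMap

private lemma key6 {H : Type*} [NormedAddCommGroup H] [InnerProductSpace ℂ H] [CompleteSpace H]
    (T : H →L[ℂ] H)
    (hT : adjoint T * adjoint T - (2 : ℂ) • (adjoint T * T) + T * T = 0) :
    IsSelfAdjoint T := by
  set D := adjoint T - T with hDdef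
  have hcomm : D * T = T * D + D * D := by
    have h : D * T - (T * D + D * D)
        = -(adjoint T * adjoint T - (2 : ℂ) • (adjoint T * T) + T * T) := by
      simp only [hDdef, two_smul]
      noncomm_ring
    rw [hT, neg_zero, sub_eq_zero] at h
    exact h
  have hn : ∀ n : ℕ, D ^ n * T = T * D ^ n + n • D ^ (n + 1) := by
    intro n
    induction n with
    | zero => simp
    | succ n ih =>
      calc D ^ (n + 1) * T = D ^ n * (D * T) := by rw [pow_succ, mul_assoc]
        _ = D ^ n * (T * D + D * D) := by rw [hcomm]
        _ = (D ^ n * T) * D + D ^ (n + 1) * D := by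
              rw [mul_add, ← mul_assoc, ← mul_assoc, ← pow_succ]
        _ = (T * D ^ n + n • D ^ (n + 1)) * D + D ^ (n + 1) * D := by rw [ih]
        _ = T * D ^ (n + 1) + n • (D ^ (n + 1) * D) + D ^ (n + 1) * D := by
              rw [add_mul, smul_mul_assoc, mul_assoc, ← pow_succ]
        _ = T * D ^ (n + 1) + (n + 1) • D ^ (n + 1 + 1) := by
              rw [pow_succ, succ_nsmul]; abel
  have hbound : ∀ n : ℕ, 1 ≤ n → (n : ℝ) * ‖D ^ (n + 1)‖ ≤ 2 * ‖D‖ ^ n * ‖T‖ := by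
    intro n hn1
    have h1 : n • D ^ (n + 1) = D ^ n * T - T * D ^ n := by
      rw [hn n]; abel
    have h4 : ‖D ^ n‖ ≤ ‖D‖ ^ n := norm_pow_le' _ hn1
    have h5 : (0:ℝ) ≤ ‖T‖ := norm_nonneg _
    have h6 : (0:ℝ) ≤ ‖D ^ n‖ := norm_nonneg _
    calc (n : ℝ) * ‖D ^ (n + 1)‖ = ‖n • D ^ (n + 1)‖ := by
          rw [← Nat.cast_smul_eq_nsmul ℝ, norm_smul]; simp
      _ = ‖D ^ n * T - T * D ^ n‖ := by rw [h1]
      _ ≤ ‖D ^ n * T‖ + ‖T * D ^ n‖ := norm_sub_le _ _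
      _ ≤ ‖D ^ n‖ * ‖T‖ + ‖T‖ * ‖D ^ n‖ :=
          add_le_add (norm_mul_le _ _) (norm_mul_le _ _)
      _ ≤ 2 * ‖D‖ ^ n * ‖T‖ := by nlinarith
  have hstarD : star D = -D := by
    rw [hDdef]
    simp [star_eq_adjoint, map_sub, adjoint_adjoint]
  have hD2sa : IsSelfAdjoint (D * D) := by
    rw [IsSelfAdjoint, star_mul, hstarD]
    noncomm_ring
  have hD2norm : ‖D * D‖ = ‖D‖ * ‖D‖ := by
    have h : ‖star D * D‖ = ‖D‖ * ‖D‖ := CStarRing.norm_star_mul_self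
    rwa [hstarD, neg_mul, norm_neg] at h
  have hpow : ∀ k : ℕ, ‖D ^ (2 ^ (k + 1))‖ = ‖D‖ ^ (2 ^ (k + 1)) := by
    intro k
    have e : D ^ (2 ^ (k + 1)) = (D * D) ^ (2 ^ k) := by
      rw [← sq, ← pow_mul, pow_succ, mul_comm]
    have h := hD2sa.nnnorm_pow_two_pow k
    have h' : ‖(D * D) ^ 2 ^ k‖ = ‖D * D‖ ^ 2 ^ k := by
      have := congrArg NNReal.toReal h
      simpa using this
    rw [e, h', hD2norm, ← sq, ← pow_mul, pow_succ, mul_comm]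
  have hDzero : D = 0 := by
    by_contra hne
    have hr : 0 < ‖D‖ := norm_pos_iff.mpr hne
    obtain ⟨k, hk⟩ := exists_nat_gt (2 * ‖T‖ / ‖D‖)
    set m := 2 ^ (k + 1) - 1 with hm
    have h2p : 1 ≤ 2 ^ (k + 1) := Nat.one_le_two_pow
    have hsucc : m + 1 = 2 ^ (k + 1) := by omega
    have hm1 : 1 ≤ m := by
      have : 2 ≤ 2 ^ (k + 1) := by
        calc 2 = 2 ^ 1 := rfl
          _ ≤ 2 ^ (k + 1) := Nat.pow_le_pow_right (by norm_num) (by omega)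
      omega
    have hle : (m : ℝ) * ‖D‖ ^ (2 ^ (k + 1)) ≤ 2 * ‖D‖ ^ m * ‖T‖ := by
      have := hbound m hm1
      rwa [hsucc, hpow k] at this
    have hkm : (k : ℝ) ≤ (m : ℝ) := by
      have hk2 : k < 2 ^ (k + 1) :=
        lt_of_lt_of_le (Nat.lt_two_pow_self (n := k)) (Nat.pow_le_pow_right (by norm_num) (Nat.le_succ k))
      have : k ≤ m := by omega
      exact_mod_cast this
    have hppos : (0:ℝ) < ‖D‖ ^ m := pow_pos hr _
    have hexp : ‖D‖ ^ (2 ^ (k + 1)) = ‖D‖ ^ m * ‖D‖ := by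
      rw [← pow_succ, hsucc]
    rw [hexp, ← mul_assoc] at hle
    have hfin : (m : ℝ) * ‖D‖ ≤ 2 * ‖T‖ := by
      have h := (mul_le_mul_iff_of_pos_right hppos).mp (by linarith [hle] :
        ((m : ℝ) * ‖D‖) * ‖D‖ ^ m ≤ (2 * ‖T‖) * ‖D‖ ^ m)
      exact h
    have hk' : (k : ℝ) * ‖D‖ ≤ 2 * ‖T‖ :=
      le_trans (mul_le_mul_of_nonneg_right hkm (norm_nonneg _)) hfin
    have : (k : ℝ) ≤ 2 * ‖T‖ / ‖D‖ := (le_div_iff₀ hr).mpr hk'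
    linarith
  rw [isSelfAdjoint_iff']
  exact sub_eq_zero.mp hDzero

theorem stmt6 {H : Type*} [NormedAddCommGroup H] [InnerProductSpace ℂ H] [CompleteSpace H]
    (T : H →L[ℂ] H)
    (hT : adjoint T * adjoint T - (2 : ℂ) • (adjoint T * T) + T * T = 0) :
    IsSelfAdjoint T ∧
      ∀ (d : ℕ) (A : Fin d → (H →L[ℂ] H)),
        (∀ i j, A i * A j = A j * A i) →
        (adjoint (∑ i, A i) * adjoint (∑ i, A i)
            - (2 : ℂ) • (adjoint (∑ i, A i) * (∑ i, A i))
            + (∑ i, A i) * (∑ i, A i) = 0) →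
        IsSelfAdjoint (∑ i, A i) := by
  exact ⟨key6 T hT, fun d A _ hA => key6 _ hA⟩
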